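/- Let G = (V, E) be a finite directed graph and let M' be a maximum matching of its split bipartite graph G'. Then the path-and-cycle cover of G induced by M' (the components of the subgraph G_F, where F is the set of edges of G pulled back from M') has the minimum number of paths among all path-and-cycle covers of G; in particular, the minimum number of paths over all PC covers of G equals |V| minus the maximum matching size of G'. -/

import Mathlib

open scoped Classical

variable {V : Type*} [DecidableEq V]

/-- In-degree of `v` in the digraph with edge set `E`. -/
def indeg (E : Finset (V × V)) (v : V) : ℕ := (E.filter (fun e => e.2 = v)).card

/-- Out-degree of `v` in the digraph with edge set `E`. -/
def outdeg (E : Finset (V × V)) (v : V) : ℕ := (E.filter (fun e => e.1 = v)).card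

/-- `l` is a simple directed path (possibly a single vertex) in the digraph `E`. -/
def IsDiPath (E : Finset (V × V)) (l : List V) : Prop :=
  l ≠ [] ∧ l.Nodup ∧ l.Chain' (fun u v => (u, v) ∈ E)

/-- `l` is a simple directed cycle in the digraph `E`. -/
def IsDiCycle (E : Finset (V × V)) (l : List V) : Prop :=
  ∃ h : l ≠ [], l.Nodup ∧ l.Chain' (fun u v => (u, v) ∈ E) ∧
    (l.getLast h, l.head h) ∈ E

/-- A path-and-cycle cover (PC cover) of the digraph `E`. -/
structure PCCover (E : Finset (V × V)) where
  paths : Finset (List V)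
  cycles : Finset (List V)
  paths_are : ∀ l ∈ paths, IsDiPath E l
  cycles_are : ∀ l ∈ cycles, IsDiCycle E l
  disj : Disjoint paths cycles
  pairwiseDisj : ∀ l₁ ∈ paths ∪ cycles, ∀ l₂ ∈ paths ∪ cycles, l₁ ≠ l₂ → ∀ v ∈ l₁, v ∉ l₂
  covers : ∀ v : V, ∃ l ∈ paths ∪ cycles, v ∈ l

/-- Edge set of the split bipartite graph of the digraph `E`, on vertex set `V ⊕ V`
(`Sum.inl` is the left copy `f_L`, `Sum.inr` the right copy `f_R`). -/
def splitEdges (E : Finset (V × V)) : Finset ((V ⊕ V) × (V ⊕ V)) :=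
  E.image (fun e => (Sum.inl e.1, Sum.inr e.2))

/-- A set of edges is a matching if no two of its edges share an endpoint. -/
def IsMatching {W : Type*} (M : Finset (W × W)) : Prop :=
  ∀ e₁ ∈ M, ∀ e₂ ∈ M, e₁ ≠ e₂ →
    e₁.1 ≠ e₂.1 ∧ e₁.1 ≠ e₂.2 ∧ e₁.2 ≠ e₂.1 ∧ e₁.2 ≠ e₂.2

/-- The set `F ⊆ E` of edges of `G` pulled back from a matching of the split bipartite graph. -/
def pullback (E : Finset (V × V)) (M : Finset ((V ⊕ V) × (V ⊕ V))) : Finset (V × V) :=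
  E.filter (fun e => (Sum.inl e.1, Sum.inr e.2) ∈ M)

/-- Weak reachability (reachability after forgetting edge directions) in the digraph `F`. -/
def WReach (F : Finset (V × V)) (a b : V) : Prop :=
  Relation.ReflTransGen (fun x y => (x, y) ∈ F ∨ (y, x) ∈ F) a b


set_option linter.unusedSectionVars false
set_option linter.unusedVariables false
set_option maxHeartbeats 1000000

lemma wreach_mono {F F' : Finset (V × V)} (h : F ⊆ F') {a b : V} (hw : WReach F a b) :
    WReach F' a b :=
  Relation.ReflTransGen.mono (fun x y (hxy : (x, y) ∈ F ∨ (y, x) ∈ F) => hxy.imp (fun h' => h h') (fun h' => h h')) _ _ hw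

lemma wreach_symm {F : Finset (V × V)} {a b : V} (hw : WReach F a b) : WReach F b a :=
  (@Relation.ReflTransGen.stdSymm _ _ ⟨fun x y hxy => hxy.symm⟩).symm _ _ hw

lemma wreach_closed {F : Finset (V × V)} {l : List V}
    (hc : ∀ v ∈ l, ∀ x, ((v, x) ∈ F ∨ (x, v) ∈ F) → x ∈ l) {v w : V}
    (hv : v ∈ l) (h : WReach F v w) : w ∈ l := by
  induction h with
  | refl => exact hv
  | tail h1 h2 ih => exact hc _ ih _ h2

lemma wreach_empty {a b : V} (h : WReach (∅ : Finset (V × V)) a b) : a = b := by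
  induction h with
  | refl => rfl
  | tail h1 h2 ih => simp at h2

lemma chain'_next {R : V → V → Prop} :
    ∀ l : List V, l.Chain' R → ∀ a ∈ l, (∀ h : l ≠ [], a ≠ l.getLast h) → ∃ x ∈ l, R a x := by
  intro l
  induction l with
  | nil => intro _ a ha; simp at ha
  | cons y t ih =>
    intro hch a ha hne
    cases t with
    | nil =>
      simp at ha
      exact absurd ha (by simpa using hne (by simp))
    | cons z s =>
      rcases List.mem_cons.1 ha with rfl | ha'
      · exact ⟨z, by simp, (List.isChain_cons_cons.1 hch).1⟩
      · obtain ⟨x, hx, hR⟩ := ih (List.isChain_cons_cons.1 hch).2 a ha'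
          (fun h hh => hne (by simp) (by rwa [List.getLast_cons (by simp)]))
        exact ⟨x, List.mem_cons_of_mem _ hx, hR⟩

lemma chain'_prev {R : V → V → Prop} :
    ∀ l : List V, l.Chain' R → ∀ a ∈ l, (∀ h : l ≠ [], a ≠ l.head h) → ∃ x ∈ l, R x a := by
  intro l
  induction l with
  | nil => intro _ a ha; simp at ha
  | cons y t ih =>
    intro hch a ha hne
    have hay : a ≠ y := by simpa using hne (by simp)
    have hat : a ∈ t := by
      rcases List.mem_cons.1 ha with rfl | h
      · exact absurd rfl hay
      · exact h
    cases t with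
    | nil => simp at hat
    | cons z s =>
      by_cases haz : a = z
      · subst haz; exact ⟨y, by simp, (List.isChain_cons_cons.1 hch).1⟩
      · obtain ⟨x, hx, hR⟩ := ih (List.isChain_cons_cons.1 hch).2 a hat (fun h => by simpa using haz)
        exact ⟨x, List.mem_cons_of_mem _ hx, hR⟩

lemma zip_tail_eq : ∀ w : List V, w.zip w.tail = w.dropLast.zip w.tail := by
  intro w
  induction w with
  | nil => rfl
  | cons a t ih =>
    cases t with
    | nil => rfl
    | cons b s =>
      show (a, b) :: (b :: s).zip ((b :: s).tail) = (a, b) :: ((b :: s).dropLast).zip ((b :: s).tail)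
      rw [ih]

lemma map_fst_zip_tail (w : List V) : (w.zip w.tail).map Prod.fst = w.dropLast := by
  rw [zip_tail_eq]
  exact List.map_fst_zip (by simp)

lemma map_snd_zip_tail (w : List V) : (w.zip w.tail).map Prod.snd = w.tail :=
  List.map_snd_zip (by simp)

lemma chain'_zip {R : V → V → Prop} :
    ∀ w : List V, w.Chain' R → ∀ p ∈ w.zip w.tail, R p.1 p.2 := by
  intro w
  induction w with
  | nil => intro _ p hp; simp at hp
  | cons a t ih =>
    cases t with
    | nil => intro _ p hp; simp at hp
    | cons b s =>
      intro hch p hp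
      rcases List.mem_cons.1 hp with rfl | hp'
      · exact (List.isChain_cons_cons.1 hch).1
      · exact ih (List.isChain_cons_cons.1 hch).2 p hp'

lemma length_zip_tail (w : List V) : (w.zip w.tail).length = w.length - 1 := by
  simp [List.length_zip, List.length_tail]

lemma zip_tail_nodup {w : List V} (h : w.dropLast.Nodup) : (w.zip w.tail).Nodup := by
  have h2 := map_fst_zip_tail w
  rw [← h2] at h
  exact h.of_map _

lemma cover_matching [Fintype V] (E : Finset (V × V)) (D : PCCover E) :
    ∃ M' : Finset ((V ⊕ V) × (V ⊕ V)), M' ⊆ splitEdges E ∧ IsMatching M' ∧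
      M'.card + D.paths.card = Fintype.card V := by
  classical
  set wk : List V → List V := fun l => if l ∈ D.cycles then l ++ l.take 1 else l with hwk
  -- basic facts per list
  have hlist : ∀ l ∈ D.paths ∪ D.cycles, l ≠ [] ∧ l.Nodup := by
    intro l hl
    rcases Finset.mem_union.1 hl with h | h
    · obtain ⟨h1, h2, _⟩ := D.paths_are l h; exact ⟨h1, h2⟩
    · obtain ⟨h1, h2, _⟩ := D.cycles_are l h; exact ⟨h1, h2⟩
  have hwkform : ∀ l, l ∈ D.cycles → ∀ h : l ≠ [], wk l = l ++ [l.head h] := by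
    intro l hl h
    simp only [hwk, if_pos hl]
    congr 1
    cases l with
    | nil => exact absurd rfl h
    | cons x xs => rfl
  have hchain : ∀ l ∈ D.paths ∪ D.cycles, (wk l).Chain' (fun u v => (u, v) ∈ E) := by
    intro l hl
    rcases Finset.mem_union.1 hl with h | h
    · have : wk l = l := by simp [hwk, Finset.disjoint_left.1 D.disj h]
      rw [this]; exact (D.paths_are l h).2.2
    · obtain ⟨hne, hnd, hch, hcl⟩ := D.cycles_are l h
      rw [hwkform l h hne]
      show List.IsChain _ _; rw [List.isChain_append]
      refine ⟨hch, by simp, ?_⟩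
      intro x hx y hy
      rw [List.getLast?_eq_getLast hne] at hx
      simp at hx hy
      subst hx; subst hy
      exact hcl
  have hmemfst : ∀ l, ∀ p ∈ (wk l).zip (wk l).tail, p.1 ∈ l ∧ p.2 ∈ l := by
    intro l p hp
    have h1 := List.of_mem_zip hp
    have hsub : ∀ x ∈ wk l, x ∈ l := by
      intro x hx
      simp only [hwk] at hx
      split at hx
      · rcases List.mem_append.1 hx with h | h
        · exact h
        · exact List.take_subset _ _ h
      · exact hx
    exact ⟨hsub _ h1.1, hsub _ (List.tail_subset _ h1.2)⟩
  have hfstnd : ∀ l ∈ D.paths ∪ D.cycles, (wk l).dropLast.Nodup := by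
    intro l hl
    obtain ⟨hne, hnd⟩ := hlist l hl
    by_cases h : l ∈ D.cycles
    · rw [hwkform l h hne, List.dropLast_concat]
      exact hnd
    · simp only [hwk, if_neg h]
      exact hnd.sublist (List.dropLast_sublist l)
  have hsndnd : ∀ l ∈ D.paths ∪ D.cycles, (wk l).tail.Nodup := by
    intro l hl
    obtain ⟨hne, hnd⟩ := hlist l hl
    by_cases h : l ∈ D.cycles
    · rw [hwkform l h hne]
      cases l with
      | nil => exact absurd rfl hne
      | cons x xs =>
        simp only [List.head_cons, List.cons_append, List.tail_cons]
        rw [List.nodup_append]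
        rw [List.nodup_cons] at hnd
        refine ⟨hnd.2, List.nodup_singleton x, ?_⟩
        intro a ha b hb hab
        simp only [List.mem_singleton] at hb
        subst hb; subst hab
        exact hnd.1 ha
    · simp only [hwk, if_neg h]
      exact hnd.sublist (List.tail_sublist l)
  set eds : List V → Finset (V × V) := fun l => ((wk l).zip (wk l).tail).toFinset with heds
  set M₀ : Finset (V × V) := (D.paths ∪ D.cycles).biUnion eds with hM₀
  have hM₀E : ∀ p ∈ M₀, p ∈ E := by
    intro p hp
    obtain ⟨l, hl, hpl⟩ := Finset.mem_biUnion.1 hp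
    exact chain'_zip _ (hchain l hl) p (List.mem_toFinset.1 hpl)
  -- same-list uniqueness
  have huniq : ∀ p ∈ M₀, ∀ q ∈ M₀, (p.1 = q.1 ∨ p.2 = q.2) → p = q := by
    intro p hp q hq hpq
    obtain ⟨l₁, hl₁, hpl₁⟩ := Finset.mem_biUnion.1 hp
    obtain ⟨l₂, hl₂, hpl₂⟩ := Finset.mem_biUnion.1 hq
    rw [heds, List.mem_toFinset] at hpl₁ hpl₂
    have hll : l₁ = l₂ := by
      by_contra hne
      rcases hpq with h | h
      · exact D.pairwiseDisj l₁ hl₁ l₂ hl₂ hne p.1 (hmemfst l₁ p hpl₁).1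
          (h ▸ (hmemfst l₂ q hpl₂).1)
      · exact D.pairwiseDisj l₁ hl₁ l₂ hl₂ hne p.2 (hmemfst l₁ p hpl₁).2
          (h ▸ (hmemfst l₂ q hpl₂).2)
    subst hll
    rcases hpq with h | h
    · have hnd : (((wk l₁).zip (wk l₁).tail).map Prod.fst).Nodup := by
        rw [map_fst_zip_tail]; exact hfstnd l₁ hl₁
      exact List.inj_on_of_nodup_map hnd hpl₁ hpl₂ h
    · have hnd : (((wk l₁).zip (wk l₁).tail).map Prod.snd).Nodup := by
        rw [map_snd_zip_tail]; exact hsndnd l₁ hl₁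
      exact List.inj_on_of_nodup_map hnd hpl₁ hpl₂ h
  refine ⟨M₀.image (fun p => (Sum.inl p.1, Sum.inr p.2)), ?_, ?_, ?_⟩
  · intro m hm
    obtain ⟨p, hp, rfl⟩ := Finset.mem_image.1 hm
    exact Finset.mem_image.2 ⟨p, hM₀E p hp, rfl⟩
  · intro e₁ h₁ e₂ h₂ hne12
    obtain ⟨p, hp, rfl⟩ := Finset.mem_image.1 h₁
    obtain ⟨q, hq, rfl⟩ := Finset.mem_image.1 h₂
    refine ⟨?_, by simp, by simp, ?_⟩
    · simp only [ne_eq, Sum.inl.injEq]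
      intro h
      exact hne12 (by rw [huniq p hp q hq (Or.inl h)])
    · simp only [ne_eq, Sum.inr.injEq]
      intro h
      exact hne12 (by rw [huniq p hp q hq (Or.inr h)])
  · -- cardinality
    have hinj : Set.InjOn (fun p : V × V => ((Sum.inl p.1 : V ⊕ V), (Sum.inr p.2 : V ⊕ V))) M₀ := by
      intro p _ q _ h
      simp only [Prod.mk.injEq, Sum.inl.injEq, Sum.inr.injEq] at h
      exact Prod.ext h.1 h.2
    rw [Finset.card_image_of_injOn hinj]
    have hdisj : (↑(D.paths ∪ D.cycles) : Set (List V)).PairwiseDisjoint eds := by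
      intro l₁ hl₁ l₂ hl₂ hne
      simp only [Finset.disjoint_left]
      intro p hp1 hp2
      rw [heds, List.mem_toFinset] at hp1 hp2
      exact D.pairwiseDisj l₁ hl₁ l₂ hl₂ hne p.1 (hmemfst l₁ p hp1).1 (hmemfst l₂ p hp2).1
    rw [hM₀, Finset.card_biUnion (fun l₁ h1 l₂ h2 h => hdisj h1 h2 h)]
    have hcard : ∀ l ∈ D.paths ∪ D.cycles, (eds l).card = (wk l).length - 1 := by
      intro l hl
      rw [heds]
      simp only
      rw [List.toFinset_card_of_nodup (zip_tail_nodup (hfstnd l hl))]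
      exact length_zip_tail _
    rw [Finset.sum_congr rfl hcard]
    rw [Finset.sum_union D.disj]
    have hp1 : ∀ l ∈ D.paths, (wk l).length - 1 = l.length - 1 := by
      intro l hl
      simp [hwk, Finset.disjoint_left.1 D.disj hl]
    have hc1 : ∀ l ∈ D.cycles, (wk l).length - 1 = l.length := by
      intro l hl
      have hne := (hlist l (Finset.mem_union_right _ hl)).1
      rw [hwkform l hl hne]
      simp
    rw [Finset.sum_congr rfl hp1, Finset.sum_congr rfl hc1]
    -- total vertex count
    have huniv : (Finset.univ : Finset V) = (D.paths ∪ D.cycles).biUnion (fun l => l.toFinset) := by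
      ext v
      simp only [Finset.mem_univ, true_iff, Finset.mem_biUnion]
      obtain ⟨l, hl, hv⟩ := D.covers v
      exact ⟨l, hl, List.mem_toFinset.2 hv⟩
    have hclen : Fintype.card V = ∑ l ∈ D.paths ∪ D.cycles, l.length := by
      rw [← Finset.card_univ, huniv]
      rw [Finset.card_biUnion]
      · refine Finset.sum_congr rfl ?_
        intro l hl
        exact List.toFinset_card_of_nodup (hlist l hl).2
      · intro l₁ h1 l₂ h2 h
        simp only [Finset.disjoint_left]
        intro v hv1 hv2
        exact D.pairwiseDisj l₁ h1 l₂ h2 h v (List.mem_toFinset.1 hv1) (List.mem_toFinset.1 hv2)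
    rw [hclen, Finset.sum_union D.disj]
    have hpl : ∑ l ∈ D.paths, (l.length - 1) + D.paths.card = ∑ l ∈ D.paths, l.length := by
      rw [Finset.card_eq_sum_ones D.paths, ← Finset.sum_add_distrib]
      refine Finset.sum_congr rfl ?_
      intro l hl
      have := (hlist l (Finset.mem_union_left _ hl)).1
      have : 1 ≤ l.length := List.length_pos_iff.2 this
      omega
    have hcc : ∑ l ∈ D.cycles, l.length = D.cycles.sum List.length := rfl
    have hcp : ∑ l ∈ D.paths, l.length = D.paths.sum List.length := rfl
    omega


lemma IsDiPath.mono {F E : Finset (V × V)} (h : F ⊆ E) {l : List V} (hp : IsDiPath F l) :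
    IsDiPath E l :=
  ⟨hp.1, hp.2.1, List.IsChain.imp (fun a b hab => h hab) hp.2.2⟩

lemma IsDiCycle.mono {F E : Finset (V × V)} (h : F ⊆ E) {l : List V} (hp : IsDiCycle F l) :
    IsDiCycle E l := by
  obtain ⟨h1, h2, h3, h4⟩ := hp
  exact ⟨h1, h2, List.IsChain.imp (fun a b hab => h hab) h3, h h4⟩

lemma exists_cover [Fintype V] (F : Finset (V × V)) :
    (∀ v, outdeg F v ≤ 1) → (∀ v, indeg F v ≤ 1) →
    ∃ C : PCCover F,
      (∀ l ∈ C.paths ∪ C.cycles, ∀ v ∈ l, ∀ w : V, (w ∈ l ↔ WReach F v w)) ∧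
      C.paths.card + F.card = Fintype.card V := by
  induction F using Finset.strongInduction with
  | _ F ih =>
    intro hout hin
    rcases F.eq_empty_or_nonempty with rfl | ⟨⟨a, b⟩, he⟩
    · -- empty graph: singleton paths
      have hinj : Function.Injective (fun v : V => [v]) := by
        intro v w h; simpa using h
      refine ⟨⟨Finset.univ.image (fun v => [v]), ∅, ?_, ?_, ?_, ?_, ?_⟩, ?_, ?_⟩
      · intro l hl
        obtain ⟨v, _, rfl⟩ := Finset.mem_image.1 hl
        exact ⟨by simp, by simp, List.isChain_singleton _⟩
      · intro l hl; simp at hl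
      · simp
      · intro l₁ h₁ l₂ h₂ hne v hv1 hv2
        simp only [Finset.union_empty] at h₁ h₂
        obtain ⟨x, _, rfl⟩ := Finset.mem_image.1 h₁
        obtain ⟨y, _, rfl⟩ := Finset.mem_image.1 h₂
        simp only [List.mem_singleton] at hv1 hv2
        subst hv1; subst hv2
        exact hne rfl
      · intro v
        exact ⟨[v], by simp, by simp⟩
      · intro l hl v hv w
        simp only [Finset.union_empty] at hl
        obtain ⟨x, _, rfl⟩ := Finset.mem_image.1 hl
        simp only [List.mem_singleton] at hv ⊢
        subst hv
        constructor
        · rintro rfl; exact Relation.ReflTransGen.refl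
        · intro h; exact (wreach_empty h).symm
      · simp [Finset.card_image_of_injective _ hinj]
    · -- pick an edge (a, b)
      set F' := F.erase (a, b) with hF'
      have hssub : F' ⊂ F := Finset.erase_ssubset he
      have hsub : F' ⊆ F := Finset.erase_subset _ _
      have hFins : insert (a, b) F' = F := Finset.insert_erase he
      have hout' : ∀ v, outdeg F' v ≤ 1 := fun v =>
        le_trans (Finset.card_le_card (Finset.filter_subset_filter _ hsub)) (hout v)
      have hin' : ∀ v, indeg F' v ≤ 1 := fun v =>
        le_trans (Finset.card_le_card (Finset.filter_subset_filter _ hsub)) (hin v)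
      obtain ⟨C', hcomp', hcard'⟩ := ih F' hssub hout' hin'
      have hnoA : ∀ x, (a, x) ∉ F' := by
        intro x hx
        have hxb : (a, x) ≠ (a, b) := Finset.ne_of_mem_erase hx
        have hss : ({(a, b), (a, x)} : Finset (V × V)) ⊆ F.filter (fun e => e.1 = a) := by
          intro p hp
          rcases Finset.mem_insert.1 hp with rfl | hp'
          · exact Finset.mem_filter.2 ⟨he, rfl⟩
          · rw [Finset.mem_singleton] at hp'
            subst hp'
            exact Finset.mem_filter.2 ⟨Finset.mem_of_mem_erase hx, rfl⟩
        have h2 : 2 ≤ outdeg F a := by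
          rw [outdeg, ← Finset.card_pair hxb.symm]
          exact Finset.card_le_card hss
        have := hout a
        omega
      have hnoB : ∀ x, (x, b) ∉ F' := by
        intro x hx
        have hxb : (x, b) ≠ (a, b) := Finset.ne_of_mem_erase hx
        have hss : ({(a, b), (x, b)} : Finset (V × V)) ⊆ F.filter (fun e => e.2 = b) := by
          intro p hp
          rcases Finset.mem_insert.1 hp with rfl | hp'
          · exact Finset.mem_filter.2 ⟨he, rfl⟩
          · rw [Finset.mem_singleton] at hp'
            subst hp'
            exact Finset.mem_filter.2 ⟨Finset.mem_of_mem_erase hx, rfl⟩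
        have h2 : 2 ≤ indeg F b := by
          rw [indeg, ← Finset.card_pair hxb.symm]
          exact Finset.card_le_card hss
        have := hin b
        omega
      obtain ⟨la, hla, haa⟩ := C'.covers a
      obtain ⟨lb, hlb, hbb⟩ := C'.covers b
      have huniq' : ∀ l ∈ C'.paths ∪ C'.cycles, ∀ v ∈ l, ∀ l' ∈ C'.paths ∪ C'.cycles,
          v ∈ l' → l = l' := by
        intro l hl v hv l' hl' hv'
        by_contra h
        exact C'.pairwiseDisj l hl l' hl' h v hv hv'
      have hclosed' : ∀ l ∈ C'.paths ∪ C'.cycles, ∀ v ∈ l, ∀ x,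
          ((v, x) ∈ F' ∨ (x, v) ∈ F') → x ∈ l := by
        intro l hl v hv x hx
        exact (hcomp' l hl v hv x).2 (Relation.ReflTransGen.single hx)
      have key_a : la ∈ C'.paths ∧ ∀ h : la ≠ [], la.getLast h = a := by
        rcases Finset.mem_union.1 hla with h | h
        · obtain ⟨h1, h2, h3⟩ := C'.paths_are la h
          refine ⟨h, fun hh => ?_⟩
          by_contra hcon
          obtain ⟨x, _, hR⟩ := chain'_next la h3 a haa (fun _ h' => hcon (h'.symm))
          exact hnoA x hR
        · exfalso
          obtain ⟨h1, h2, h3, h4⟩ := C'.cycles_are la h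
          by_cases hc : a = la.getLast h1
          · rw [← hc] at h4
            exact hnoA _ h4
          · obtain ⟨x, _, hR⟩ := chain'_next la h3 a haa (fun _ => hc)
            exact hnoA x hR
      have key_b : lb ∈ C'.paths ∧ ∀ h : lb ≠ [], lb.head h = b := by
        rcases Finset.mem_union.1 hlb with h | h
        · obtain ⟨h1, h2, h3⟩ := C'.paths_are lb h
          refine ⟨h, fun hh => ?_⟩
          by_contra hcon
          obtain ⟨x, _, hR⟩ := chain'_prev lb h3 b hbb (fun _ h' => hcon (h'.symm))
          exact hnoB x hR
        · exfalso
          obtain ⟨h1, h2, h3, h4⟩ := C'.cycles_are lb h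
          by_cases hc : b = lb.head h1
          · rw [← hc] at h4
            exact hnoB _ h4
          · obtain ⟨x, _, hR⟩ := chain'_prev lb h3 b hbb (fun _ => hc)
            exact hnoB x hR
      have hlane : la ≠ [] := (C'.paths_are la key_a.1).1
      have hlbne : lb ≠ [] := (C'.paths_are lb key_b.1).1
      have hFmem : ∀ p : V × V, p ∈ F ↔ p = (a, b) ∨ p ∈ F' := by
        intro p
        rw [← hFins, Finset.mem_insert]
      by_cases hll : la = lb
      · -- close up a cycle
        subst hll
        have hunion_eq : C'.paths.erase la ∪ insert la C'.cycles = C'.paths ∪ C'.cycles := by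
          ext l
          simp only [Finset.mem_union, Finset.mem_erase, Finset.mem_insert]
          constructor
          · rintro (⟨_, h⟩ | rfl | h)
            · exact Or.inl h
            · exact Or.inl key_a.1
            · exact Or.inr h
          · rintro (h | h)
            · by_cases hh : l = la
              · exact Or.inr (Or.inl hh)
              · exact Or.inl ⟨hh, h⟩
            · exact Or.inr (Or.inr h)
        refine ⟨⟨C'.paths.erase la, insert la C'.cycles, ?_, ?_, ?_, ?_, ?_⟩, ?_, ?_⟩
        · intro l hl
          exact (C'.paths_are l (Finset.mem_of_mem_erase hl)).mono hsub
        · intro l hl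
          rcases Finset.mem_insert.1 hl with rfl | hl'
          · obtain ⟨h1, h2, h3⟩ := C'.paths_are l key_a.1
            refine ⟨h1, h2, List.IsChain.imp (fun x y hxy => hsub hxy) h3, ?_⟩
            rw [key_a.2 h1, key_b.2 h1]
            exact he
          · exact (C'.cycles_are l hl').mono hsub
        · rw [Finset.disjoint_insert_right]
          refine ⟨Finset.notMem_erase _ _, Finset.disjoint_of_subset_left (Finset.erase_subset _ _) C'.disj⟩
        · intro l₁ h₁ l₂ h₂ hne v hv
          rw [hunion_eq] at h₁ h₂
          exact C'.pairwiseDisj l₁ h₁ l₂ h₂ hne v hv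
        · intro v
          obtain ⟨l, hl, hv⟩ := C'.covers v
          rw [hunion_eq]
          exact ⟨l, hl, hv⟩
        · intro l hl v hv w
          rw [hunion_eq] at hl
          have hclosedF : ∀ x ∈ l, ∀ y, ((x, y) ∈ F ∨ (y, x) ∈ F) → y ∈ l := by
            intro x hx y hy
            rcases hy with hy | hy <;> rw [hFmem] at hy
            · rcases hy with hy | hy
              · -- (x, y) = (a, b)
                have hxa : x = a := congrArg Prod.fst hy
                have hyb : y = b := congrArg Prod.snd hy
                subst hxa; subst hyb
                have : l = la := huniq' l hl x hx la hla haa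
                subst this
                exact hbb
              · exact hclosed' l hl x hx y (Or.inl hy)
            · rcases hy with hy | hy
              · have hya : y = a := congrArg Prod.fst hy
                have hxb : x = b := congrArg Prod.snd hy
                subst hya; subst hxb
                have : l = la := huniq' l hl x hx la hla hbb
                subst this
                exact haa
              · exact hclosed' l hl x hx y (Or.inr hy)
          constructor
          · intro hw
            exact wreach_mono hsub ((hcomp' l hl v hv w).1 hw)
          · intro hw
            exact wreach_closed hclosedF hv hw
        · show (C'.paths.erase la).card + F.card = Fintype.card V
          have h1 : (C'.paths.erase la).card = C'.paths.card - 1 :=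
            Finset.card_erase_of_mem key_a.1
          have h2 : F'.card = F.card - 1 := Finset.card_erase_of_mem he
          have h3 : 1 ≤ F.card := Finset.card_pos.2 ⟨_, he⟩
          have h4 : 1 ≤ C'.paths.card := Finset.card_pos.2 ⟨_, key_a.1⟩
          omega
      · -- merge two paths
        have hdisjab : ∀ v ∈ la, v ∉ lb := C'.pairwiseDisj la hla lb hlb hll
        have hmergepath : IsDiPath F (la ++ lb) := by
          refine ⟨by simp [hlane], ?_, ?_⟩
          · rw [List.nodup_append]
            exact ⟨(C'.paths_are la key_a.1).2.1, (C'.paths_are lb key_b.1).2.1, fun x hx y hy hxy => hdisjab x hx (hxy ▸ hy)⟩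
          · show List.IsChain _ _; rw [List.isChain_append]
            refine ⟨List.IsChain.imp (fun x y hxy => hsub hxy) (C'.paths_are la key_a.1).2.2,
              List.IsChain.imp (fun x y hxy => hsub hxy) (C'.paths_are lb key_b.1).2.2, ?_⟩
            intro x hx y hy
            rw [List.getLast?_eq_getLast hlane] at hx
            rw [List.head?_eq_head hlbne] at hy
            simp only [Option.mem_def, Option.some.injEq] at hx hy
            rw [← hx, ← hy] at *
            rw [key_a.2 hlane, key_b.2 hlbne] at *
            exact he
        have hmerge_ne : ∀ l ∈ C'.paths ∪ C'.cycles, la ++ lb ≠ l := by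
          intro l hl hcon
          have hal : a ∈ l := hcon ▸ (List.mem_append_left lb haa)
          have heq : la = l := huniq' la hla a haa l hl hal
          rw [← heq] at hcon
          have hnil : lb = [] := by
            have := congrArg List.length hcon
            simp at this
            exact this
          exact hlbne hnil
        have hmemchar : ∀ l, l ∈ insert (la ++ lb) ((C'.paths.erase la).erase lb) ∪ C'.cycles ↔
            (l = la ++ lb ∨ (l ∈ C'.paths ∪ C'.cycles ∧ l ≠ la ∧ l ≠ lb)) := by
          intro l
          simp only [Finset.mem_union, Finset.mem_insert, Finset.mem_erase]
          constructor
          · rintro ((rfl | ⟨h1, h2, h3⟩) | h)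
            · exact Or.inl rfl
            · exact Or.inr ⟨Or.inl h3, h2, h1⟩
            · refine Or.inr ⟨Or.inr h, ?_, ?_⟩
              · rintro rfl
                exact (Finset.disjoint_left.1 C'.disj key_a.1) h
              · rintro rfl
                exact (Finset.disjoint_left.1 C'.disj key_b.1) h
          · rintro (rfl | ⟨h | h, h2, h3⟩)
            · exact Or.inl (Or.inl rfl)
            · exact Or.inl (Or.inr ⟨h3, h2, h⟩)
            · exact Or.inr h
        refine ⟨⟨insert (la ++ lb) ((C'.paths.erase la).erase lb), C'.cycles, ?_, ?_, ?_, ?_, ?_⟩,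
          ?_, ?_⟩
        · intro l hl
          rcases Finset.mem_insert.1 hl with rfl | hl'
          · exact hmergepath
          · exact (C'.paths_are l (Finset.mem_of_mem_erase (Finset.mem_of_mem_erase hl'))).mono hsub
        · intro l hl
          exact (C'.cycles_are l hl).mono hsub
        · rw [Finset.disjoint_left]
          intro l hl hlc
          rcases Finset.mem_insert.1 hl with rfl | hl'
          · exact hmerge_ne _ (Finset.mem_union_right _ hlc) rfl
          · exact (Finset.disjoint_left.1 C'.disj
              (Finset.mem_of_mem_erase (Finset.mem_of_mem_erase hl'))) hlc
        · intro l₁ h₁ l₂ h₂ hne v hv1 hv2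
          rcases (hmemchar l₁).1 h₁ with rfl | ⟨hl₁, hne₁a, hne₁b⟩ <;>
            rcases (hmemchar l₂).1 h₂ with h₂' | ⟨hl₂, hne₂a, hne₂b⟩
          · exact hne h₂'.symm
          · rcases List.mem_append.1 hv1 with hv | hv
            · exact C'.pairwiseDisj la hla l₂ hl₂ (fun hh => hne₂a hh.symm) v hv hv2
            · exact C'.pairwiseDisj lb hlb l₂ hl₂ (fun hh => hne₂b hh.symm) v hv hv2
          · subst h₂'
            rcases List.mem_append.1 hv2 with hv | hv
            · exact C'.pairwiseDisj la hla l₁ hl₁ (fun hh => hne₁a hh.symm) v hv hv1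
            · exact C'.pairwiseDisj lb hlb l₁ hl₁ (fun hh => hne₁b hh.symm) v hv hv1
          · exact C'.pairwiseDisj l₁ hl₁ l₂ hl₂ hne v hv1 hv2
        · intro v
          obtain ⟨l, hl, hv⟩ := C'.covers v
          by_cases h1 : l = la
          · subst h1
            exact ⟨l ++ lb, Finset.mem_union_left _ (Finset.mem_insert_self _ _),
              List.mem_append_left _ hv⟩
          · by_cases h2 : l = lb
            · subst h2
              exact ⟨la ++ l, Finset.mem_union_left _ (Finset.mem_insert_self _ _),
                List.mem_append_right _ hv⟩
            · exact ⟨l, (hmemchar l).2 (Or.inr ⟨hl, h1, h2⟩), hv⟩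
        · intro l hl v hv w
          have hclosedF : ∀ x ∈ l, ∀ y, ((x, y) ∈ F ∨ (y, x) ∈ F) → y ∈ l := by
            intro x hx y hy
            rcases (hmemchar l).1 hl with rfl | ⟨hl', hnea, hneb⟩
            · -- merged list
              rcases hy with hy | hy <;> rw [hFmem] at hy
              · rcases hy with hy | hy
                · have hyb : y = b := congrArg Prod.snd hy
                  subst hyb
                  exact List.mem_append_right _ hbb
                · rcases List.mem_append.1 hx with hx' | hx'
                  · exact List.mem_append_left _ (hclosed' la hla x hx' y (Or.inl hy))
                  · exact List.mem_append_right _ (hclosed' lb hlb x hx' y (Or.inl hy))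
              · rcases hy with hy | hy
                · have hya : y = a := congrArg Prod.fst hy
                  subst hya
                  exact List.mem_append_left _ haa
                · rcases List.mem_append.1 hx with hx' | hx'
                  · exact List.mem_append_left _ (hclosed' la hla x hx' y (Or.inr hy))
                  · exact List.mem_append_right _ (hclosed' lb hlb x hx' y (Or.inr hy))
            · -- old list
              rcases hy with hy | hy <;> rw [hFmem] at hy
              · rcases hy with hy | hy
                · have hxa : x = a := congrArg Prod.fst hy
                  subst hxa
                  exact absurd (huniq' l hl' x hx la hla haa) hnea
                · exact hclosed' l hl' x hx y (Or.inl hy)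
              · rcases hy with hy | hy
                · have hxb : x = b := congrArg Prod.snd hy
                  subst hxb
                  exact absurd (huniq' l hl' x hx lb hlb hbb) hneb
                · exact hclosed' l hl' x hx y (Or.inr hy)
          constructor
          · intro hw
            rcases (hmemchar l).1 hl with rfl | ⟨hl', _, _⟩
            · -- merged list, four cases
              have hstep : WReach F a b := Relation.ReflTransGen.single (Or.inl he)
              have hcross : ∀ p ∈ la, ∀ q ∈ lb, WReach F p q := by
                intro p hp q hq
                refine Relation.ReflTransGen.trans
                  (wreach_mono hsub ((hcomp' la hla p hp a).1 haa)) ?_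
                exact Relation.ReflTransGen.trans hstep
                  (wreach_mono hsub ((hcomp' lb hlb b hbb q).1 hq))
              rcases List.mem_append.1 hv with hv' | hv' <;>
                rcases List.mem_append.1 hw with hw' | hw'
              · exact wreach_mono hsub ((hcomp' la hla v hv' w).1 hw')
              · exact hcross v hv' w hw'
              · exact wreach_symm (hcross w hw' v hv')
              · exact wreach_mono hsub ((hcomp' lb hlb v hv' w).1 hw')
            · exact wreach_mono hsub ((hcomp' l hl' v hv w).1 hw)
          · intro hw
            exact wreach_closed hclosedF hv hw
        · have hlbmem : lb ∈ C'.paths.erase la := Finset.mem_erase.2 ⟨fun hh => hll hh.symm, key_b.1⟩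
          have hnm : la ++ lb ∉ (C'.paths.erase la).erase lb := by
            intro hmem
            exact hmerge_ne _ (Finset.mem_union_left _
              (Finset.mem_of_mem_erase (Finset.mem_of_mem_erase hmem))) rfl
          show (insert (la ++ lb) ((C'.paths.erase la).erase lb)).card + F.card = Fintype.card V
          rw [Finset.card_insert_of_notMem hnm]
          have h1 : (C'.paths.erase la).card = C'.paths.card - 1 :=
            Finset.card_erase_of_mem key_a.1
          have h2 : ((C'.paths.erase la).erase lb).card = (C'.paths.erase la).card - 1 :=
            Finset.card_erase_of_mem hlbmem
          have h3 : 1 ≤ (C'.paths.erase la).card := Finset.card_pos.2 ⟨_, hlbmem⟩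
          have h4 : F'.card = F.card - 1 := Finset.card_erase_of_mem he
          have h5 : 1 ≤ F.card := Finset.card_pos.2 ⟨_, he⟩
          omega


def PCCover.relax {F E : Finset (V × V)} (h : F ⊆ E) (C : PCCover F) : PCCover E :=
  { paths := C.paths, cycles := C.cycles,
    paths_are := fun l hl => (C.paths_are l hl).mono h,
    cycles_are := fun l hl => (C.cycles_are l hl).mono h,
    disj := C.disj, pairwiseDisj := C.pairwiseDisj, covers := C.covers }

theorem stmt3 [Fintype V] (E : Finset (V × V)) (M : Finset ((V ⊕ V) × (V ⊕ V)))
    (hsub : M ⊆ splitEdges E) (hmatch : IsMatching M)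
    (hmax : ∀ M' : Finset ((V ⊕ V) × (V ⊕ V)),
      M' ⊆ splitEdges E → IsMatching M' → M'.card ≤ M.card) :
    (∃ C : PCCover (pullback E M),
      (∀ l ∈ C.paths ∪ C.cycles, ∀ v ∈ l, ∀ w : V,
        (w ∈ l ↔ WReach (pullback E M) v w)) ∧
      (∀ D : PCCover E, C.paths.card ≤ D.paths.card) ∧
      C.paths.card = Fintype.card V - M.card) ∧
    IsLeast {m : ℕ | ∃ D : PCCover E, D.paths.card = m} (Fintype.card V - M.card) := by
  classical
  set F := pullback E M with hF
  have hFsub : F ⊆ E := Finset.filter_subset _ _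
  have hFmem : ∀ p : V × V, p ∈ F ↔ p ∈ E ∧ (Sum.inl p.1, Sum.inr p.2) ∈ M := by
    intro p
    rw [hF, pullback, Finset.mem_filter]
  have hinj : Function.Injective (fun p : V × V => ((Sum.inl p.1 : V ⊕ V), (Sum.inr p.2 : V ⊕ V))) := by
    intro p q h
    simp only [Prod.mk.injEq, Sum.inl.injEq, Sum.inr.injEq] at h
    exact Prod.ext h.1 h.2
  have hdout : ∀ v, outdeg F v ≤ 1 := by
    intro v
    rw [outdeg]
    refine Finset.card_le_one.2 ?_
    intro p hp q hq
    rw [Finset.mem_filter, hFmem] at hp hq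
    by_contra hpq
    have hσ : (fun p : V × V => ((Sum.inl p.1 : V ⊕ V), (Sum.inr p.2 : V ⊕ V))) p ≠
        (fun p : V × V => ((Sum.inl p.1 : V ⊕ V), (Sum.inr p.2 : V ⊕ V))) q :=
      fun h => hpq (hinj h)
    have := (hmatch _ hp.1.2 _ hq.1.2 hσ).1
    simp only [ne_eq, Sum.inl.injEq] at this
    exact this (hp.2.trans hq.2.symm)
  have hdin : ∀ v, indeg F v ≤ 1 := by
    intro v
    rw [indeg]
    refine Finset.card_le_one.2 ?_
    intro p hp q hq
    rw [Finset.mem_filter, hFmem] at hp hq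
    by_contra hpq
    have hσ : (fun p : V × V => ((Sum.inl p.1 : V ⊕ V), (Sum.inr p.2 : V ⊕ V))) p ≠
        (fun p : V × V => ((Sum.inl p.1 : V ⊕ V), (Sum.inr p.2 : V ⊕ V))) q :=
      fun h => hpq (hinj h)
    have := (hmatch _ hp.1.2 _ hq.1.2 hσ).2.2.2
    simp only [ne_eq, Sum.inr.injEq] at this
    exact this (hp.2.trans hq.2.symm)
  have hMeq : M = F.image (fun p : V × V => ((Sum.inl p.1 : V ⊕ V), (Sum.inr p.2 : V ⊕ V))) := by
    ext m
    constructor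
    · intro hm
      obtain ⟨e, he, hem⟩ := Finset.mem_image.1 (hsub hm)
      refine Finset.mem_image.2 ⟨e, ?_, hem⟩
      rw [hFmem]
      exact ⟨he, by rw [show ((Sum.inl e.1 : V ⊕ V), (Sum.inr e.2 : V ⊕ V)) = m from hem]; exact hm⟩
    · intro hm
      obtain ⟨e, he, hem⟩ := Finset.mem_image.1 hm
      rw [hFmem] at he
      rw [← hem]
      exact he.2
  have hMcard : M.card = F.card := by
    rw [hMeq]
    exact Finset.card_image_of_injective _ hinj
  obtain ⟨C, hcompC, hcardC⟩ := exists_cover F hdout hdin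
  have hClb : ∀ D : PCCover E, C.paths.card ≤ D.paths.card := by
    intro D
    obtain ⟨M', hsub', hm', hc'⟩ := cover_matching E D
    have := hmax M' hsub' hm'
    omega
  have hCcard : C.paths.card = Fintype.card V - M.card := by omega
  refine ⟨⟨C, hcompC, hClb, hCcard⟩, ⟨C.relax hFsub, hCcard⟩, ?_⟩
  rintro m ⟨D, rfl⟩
  rw [← hCcard]
  exact hClb D
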